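/- Let M be a real p×q matrix, i ∈ [p], j ∈ [q], and let M' be M with row i deleted, M'' be M with column j deleted, and N be M with both row i and column j deleted. Then the conditions (rank(N) ≤ r−1 and rank(M) ≤ r) hold if and only if (rank(N) ≤ r−1 and at least one of rank(M') ≤ r−1 or rank(M'') ≤ r−1) holds. -/

import Mathlib

set_option synthInstance.maxHeartbeats 1000000
set_option maxHeartbeats 1000000

open Matrix

noncomputable section

variable {p q : ℕ}

/-- restriction map deleting coordinate i -/
def resMap (i : Fin p) : (Fin p → ℝ) →ₗ[ℝ] ({k : Fin p // k ≠ i} → ℝ) :=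
  LinearMap.funLeft ℝ ℝ (fun k : {k : Fin p // k ≠ i} => (k : Fin p))

lemma row_mulVecLin {n : Type*} [Fintype n] (A : Matrix (Fin p) n ℝ) (i : Fin p) :
    (A.submatrix (fun k : {k : Fin p // k ≠ i} => (k : Fin p)) id).mulVecLin
      = (resMap i).comp A.mulVecLin := by
  ext v k
  rfl

lemma row_rank_eq {n : Type*} [Fintype n] (A : Matrix (Fin p) n ℝ) (i : Fin p) :
    (A.submatrix (fun k : {k : Fin p // k ≠ i} => (k : Fin p)) id).rank
      = Module.finrank ℝ ((LinearMap.range A.mulVecLin).map (resMap i)) := by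
  rw [Matrix.rank, row_mulVecLin, LinearMap.range_comp]

lemma ker_small (i : Fin p) (U : Submodule ℝ (Fin p → ℝ)) :
    Module.finrank ℝ (LinearMap.ker ((resMap i).domRestrict U)) ≤ 1 := by
  set φ := (LinearMap.proj i ∘ₗ U.subtype).domRestrict
      (LinearMap.ker ((resMap i).domRestrict U)) with hφ
  have hker : LinearMap.ker φ = ⊥ := by
    apply LinearMap.ker_eq_bot'.mpr
    intro x hx
    simp only [hφ, LinearMap.domRestrict_apply, LinearMap.comp_apply, LinearMap.proj_apply,
      Submodule.subtype_apply] at hx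
    have hxk := x.2
    simp only [LinearMap.mem_ker, LinearMap.domRestrict_apply] at hxk
    ext1
    ext1
    funext k
    by_cases hk : k = i
    · subst hk
      exact hx
    · exact congrFun hxk ⟨k, hk⟩
  have h : Function.Injective φ := fun a b hab => by
    have h0 := LinearMap.ker_eq_bot'.mp hker (a - b) ((φ.map_sub a b).trans (by rw [hab, sub_self]))
    exact sub_eq_zero.mp h0
  have := LinearMap.finrank_le_finrank_of_injective h
  simpa using this

lemma finrank_eq_map_add (i : Fin p) (U : Submodule ℝ (Fin p → ℝ)) :
    Module.finrank ℝ U = Module.finrank ℝ (U.map (resMap i))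
      + Module.finrank ℝ (LinearMap.ker ((resMap i).domRestrict U)) := by
  have := LinearMap.finrank_range_add_finrank_ker ((resMap i).domRestrict U)
  rw [LinearMap.range_domRestrict] at this
  exact this.symm


variable {r : ℕ}

/-- extension by zero at coordinate j -/
def extMap (j : Fin q) : ({l : Fin q // l ≠ j} → ℝ) →ₗ[ℝ] (Fin q → ℝ) where
  toFun v := fun l' => if h : l' = j then 0 else v ⟨l', h⟩
  map_add' x y := by funext l'; by_cases h : l' = j <;> simp [h]
  map_smul' c x := by funext l'; by_cases h : l' = j <;> simp [h]

lemma col_mulVecLin (A : Matrix (Fin p) (Fin q) ℝ) (j : Fin q) :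
    (A.submatrix id (fun l : {l : Fin q // l ≠ j} => (l : Fin q))).mulVecLin
      = A.mulVecLin ∘ₗ extMap j := by
  refine LinearMap.ext fun v => funext fun k => ?_
  simp only [Matrix.mulVecLin_apply, LinearMap.comp_apply, Matrix.mulVec, dotProduct,
    Matrix.submatrix_apply, id_eq]
  symm
  rw [← Finset.add_sum_erase Finset.univ _ (Finset.mem_univ j)]
  have hs : ∀ x : Fin q, x ∈ Finset.univ.erase j ↔ x ≠ j := by simp
  have hsum := Finset.sum_subtype (M := ℝ) (p := fun l : Fin q => l ≠ j) (F := inferInstance)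
    (Finset.univ.erase j) hs (fun l' => A k l' * extMap j v l')
  rw [hsum]
  simp only [extMap, LinearMap.coe_mk, AddHom.coe_mk]
  rw [dif_pos trivial, mul_zero, zero_add]
  exact Finset.sum_congr rfl fun x _ => by rw [dif_neg x.2]

lemma rank_le_row (A : Matrix (Fin p) (Fin q) ℝ) (i : Fin p) :
    A.rank ≤ (A.submatrix (fun k : {k : Fin p // k ≠ i} => (k : Fin p)) id).rank + 1 := by
  rw [Matrix.rank, row_rank_eq, finrank_eq_map_add i (LinearMap.range A.mulVecLin)]
  exact Nat.add_le_add_left (ker_small i _) _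

lemma rank_le_col (A : Matrix (Fin p) (Fin q) ℝ) (j : Fin q) :
    A.rank ≤ (A.submatrix id (fun l : {l : Fin q // l ≠ j} => (l : Fin q))).rank + 1 := by
  have h := rank_le_row Aᵀ j
  rwa [Matrix.rank_transpose, ← Matrix.transpose_submatrix, Matrix.rank_transpose] at h

lemma hard (M : Matrix (Fin p) (Fin q) ℝ) (i : Fin p) (j : Fin q)
    (hN : (M.submatrix (fun k : {k : Fin p // k ≠ i} => (k : Fin p))
        (fun l : {l : Fin q // l ≠ j} => (l : Fin q))).rank < r)
    (h' : r ≤ (M.submatrix (fun k : {k : Fin p // k ≠ i} => (k : Fin p)) id).rank)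
    (h'' : r ≤ (M.submatrix id (fun l : {l : Fin q // l ≠ j} => (l : Fin q))).rank) :
    r < M.rank := by
  rw [row_rank_eq] at h'
  set A := M.submatrix id (fun l : {l : Fin q // l ≠ j} => (l : Fin q)) with hA
  set V := LinearMap.range M.mulVecLin with hV
  set W := LinearMap.range A.mulVecLin with hW
  have hWV : W ≤ V := by
    rw [hW, hA, col_mulVecLin]
    exact LinearMap.range_comp_le_range _ _
  have hNA : M.submatrix (fun k : {k : Fin p // k ≠ i} => (k : Fin p))
        (fun l : {l : Fin q // l ≠ j} => (l : Fin q))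
      = A.submatrix (fun k : {k : Fin p // k ≠ i} => (k : Fin p)) id := by
    rw [hA, Matrix.submatrix_submatrix]
    rfl
  rw [hNA, row_rank_eq, ← hW] at hN
  have hWrank : (A.rank : ℕ) = Module.finrank ℝ W := rfl
  have h1 := finrank_eq_map_add i W
  have hker : 0 < Module.finrank ℝ (LinearMap.ker ((resMap i).domRestrict W)) := by
    omega
  haveI hnt : Nontrivial (LinearMap.ker ((resMap i).domRestrict W)) :=
    Module.finrank_pos_iff.mp hker
  obtain ⟨x, hx⟩ := exists_ne (0 : LinearMap.ker ((resMap i).domRestrict W))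
  have hx1 : ((x : W) : Fin p → ℝ) ∈ V := hWV (x : W).2
  have hx2 : resMap i ((x : W) : Fin p → ℝ) = 0 := x.2
  have hy : (⟨⟨((x : W) : Fin p → ℝ), hx1⟩, hx2⟩ :
      LinearMap.ker ((resMap i).domRestrict V)) ≠ 0 := by
    intro h
    apply hx
    have h0 := congrArg
      (fun z : LinearMap.ker ((resMap i).domRestrict V) => ((z : V) : Fin p → ℝ)) h
    simp only at h0
    refine Subtype.ext (Subtype.ext ?_)
    simpa using h0
  have hkerV : 0 < Module.finrank ℝ (LinearMap.ker ((resMap i).domRestrict V)) :=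
    Module.finrank_pos_iff.mpr (nontrivial_of_ne _ _ hy)
  have h2 := finrank_eq_map_add i V
  have hMrank : M.rank = Module.finrank ℝ V := rfl
  omega

end

theorem stmt0 {p q r : ℕ} (M : Matrix (Fin p) (Fin q) ℝ) (i : Fin p) (j : Fin q) :
    ((M.submatrix (fun k : {k : Fin p // k ≠ i} => (k : Fin p))
        (fun l : {l : Fin q // l ≠ j} => (l : Fin q))).rank < r ∧ M.rank ≤ r) ↔
    ((M.submatrix (fun k : {k : Fin p // k ≠ i} => (k : Fin p))
        (fun l : {l : Fin q // l ≠ j} => (l : Fin q))).rank < r ∧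
      ((M.submatrix (fun k : {k : Fin p // k ≠ i} => (k : Fin p)) id).rank < r ∨
       (M.submatrix id (fun l : {l : Fin q // l ≠ j} => (l : Fin q))).rank < r)) := by
  constructor
  · rintro ⟨hN, hM⟩
    refine ⟨hN, ?_⟩
    by_contra h
    push_neg at h
    exact absurd hM (not_le.mpr (hard M i j hN h.1 h.2))
  · rintro ⟨hN, h⟩
    refine ⟨hN, ?_⟩
    rcases h with h | h
    · have := rank_le_row M i
      omega
    · have := rank_le_col M j
      omega
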